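/- Let B be a Boolean algebra with a unary operation □ satisfying □1 = 1, □(x ∧ y) = □x ∧ □y, and □x ≤ □□x. Then its doubleton B* (operations componentwise on B × 2 except □(x,y) = (□x, z) with z = 1 iff x = 1) satisfies □a ≤ □□a for all a ∈ B*. -/
import Mathlib

theorem stmt_12 {B : Type*} [BooleanAlgebra B] (box : B → B)
    (h1 : box ⊤ = ⊤) (h2 : ∀ x y : B, box (x ⊓ y) = box x ⊓ box y)
    (h3 : ∀ x : B, box x ≤ box (box x))
    (boxD : B × Bool → B × Bool)
    (hD : ∀ a : B × Bool, (boxD a).1 = box a.1 ∧ ((boxD a).2 = ⊤ ↔ a.1 = ⊤)) :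
    ∀ a : B × Bool, boxD a ≤ boxD (boxD a) := by
  intro a
  obtain ⟨hf, hs⟩ := hD a
  obtain ⟨hf2, hs2⟩ := hD (boxD a)
  constructor
  · rw [hf2, hf]; exact h3 a.1
  · show (boxD a).2 ≤ _
    by_cases h : (boxD a).2 = ⊤
    · have : (boxD (boxD a)).2 = ⊤ := by
        rw [hs2, hf, hs.mp h, h1]
      simp [h, this]
    · simp at h; simp [h]
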